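/- arXiv:2602.19425 — 2 statements merged into one kernel-verified Lean document; each statement's English description precedes it below -/
import Mathlib

section
/- For an irrational real number x, the limsup over integers q → ∞ of log(1/dist(qx,ℤ))/q equals the infimum of the set of B ∈ [0,∞) such that e^{Bq}·dist(qx,ℤ) → +∞ as q → +∞, and also equals the infimum of the set of B ∈ [0,∞) such that there exist C > 0 and Q with dist(qx,ℤ) ≥ C e^{-Bq} for all q ≥ Q. -/
open Filter
open scoped ENNReal

/-- Distance from a real number to the nearest integer. -/
noncomputable def distZ (y : ℝ) : ℝ := |y - round y|

/-- The exponential type of `x`: `limsup_{q→∞} log(1/dist(qx,ℤ))/q`, valued in `[0,∞]`. -/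
noncomputable def Bsup (x : ℝ) : ℝ≥0∞ :=
  Filter.limsup (fun q : ℕ => ENNReal.ofReal (Real.log (distZ ((q : ℝ) * x))⁻¹ / (q : ℝ)))
    Filter.atTop

lemma distZ_pos (x : ℝ) (hx : Irrational x) {q : ℕ} (hq : 1 ≤ q) :
    0 < distZ ((q : ℝ) * x) := by
  have h : Irrational ((q : ℝ) * x) := by
    have : (q : ℤ) ≠ 0 := by exact_mod_cast Nat.one_le_iff_ne_zero.mp hq
    simpa using (hx.intCast_mul this)
  have : (q : ℝ) * x ≠ (round ((q : ℝ) * x) : ℝ) := fun h' => h.ne_int _ (by exact_mod_cast h')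
  simpa [distZ, abs_pos, sub_eq_zero] using this

/-- Upper bound: if `C e^{-bq} ≤ δ_q` eventually then `Bsup x ≤ ofReal b`. -/
lemma Bsup_le (x : ℝ) {b C : ℝ} (hC : 0 < C) (Q : ℕ)
    (h : ∀ q : ℕ, Q ≤ q → C * Real.exp (-b * q) ≤ distZ ((q : ℝ) * x)) :
    Bsup x ≤ ENNReal.ofReal b := by
  have hg : Tendsto (fun q : ℕ => ENNReal.ofReal (Real.log C⁻¹ / (q : ℝ) + b)) atTop
      (nhds (ENNReal.ofReal b)) := by
    apply ENNReal.tendsto_ofReal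
    have := (tendsto_const_div_atTop_nhds_zero_nat (Real.log C⁻¹)).add
      (tendsto_const_nhds (x := b))
    simpa using this
  have hle : ∀ᶠ q : ℕ in atTop,
      ENNReal.ofReal (Real.log (distZ ((q : ℝ) * x))⁻¹ / (q : ℝ)) ≤
        ENNReal.ofReal (Real.log C⁻¹ / (q : ℝ) + b) := by
    filter_upwards [eventually_ge_atTop Q, eventually_ge_atTop 1] with q hQ h1
    apply ENNReal.ofReal_le_ofReal
    have hqpos : (0 : ℝ) < q := by exact_mod_cast h1
    have hδ := h q hQ
    have hδpos : 0 < distZ ((q : ℝ) * x) := lt_of_lt_of_le (by positivity) hδ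
    have hlog : Real.log (C * Real.exp (-b * q)) ≤ Real.log (distZ ((q : ℝ) * x)) :=
      Real.log_le_log (by positivity) hδ
    rw [Real.log_mul (ne_of_gt hC) (Real.exp_ne_zero _), Real.log_exp] at hlog
    have key : Real.log (distZ ((q : ℝ) * x))⁻¹ ≤ Real.log C⁻¹ + b * q := by
      rw [Real.log_inv, Real.log_inv]
      linarith
    calc Real.log (distZ ((q : ℝ) * x))⁻¹ / (q : ℝ)
        ≤ (Real.log C⁻¹ + b * q) / q := by
          exact div_le_div_of_nonneg_right key hqpos.le |>.trans_eq rfl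
      _ = Real.log C⁻¹ / q + b := by field_simp
  calc Bsup x ≤ limsup (fun q : ℕ => ENNReal.ofReal (Real.log C⁻¹ / (q : ℝ) + b)) atTop :=
        limsup_le_limsup hle
    _ = ENNReal.ofReal b := hg.limsup_eq

/-- If `Bsup x < ofReal b` then `e^{bq} δ_q → ∞`. -/
lemma tendsto_of_Bsup_lt (x : ℝ) (hx : Irrational x) {b : ℝ}
    (h : Bsup x < ENNReal.ofReal b) :
    Tendsto (fun q : ℕ => Real.exp (b * q) * distZ ((q : ℝ) * x)) atTop atTop := by
  obtain ⟨c, hc1, hc2⟩ := exists_between h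
  have hcne : c ≠ ⊤ := ne_top_of_lt hc2
  set b'' := c.toReal with hb''
  have hb''pos : 0 < b'' := ENNReal.toReal_pos (by
      intro h0; rw [h0] at hc1; exact ENNReal.not_lt_zero hc1) hcne
  have hbpos : 0 < b := by
    by_contra hb
    push_neg at hb
    rw [ENNReal.ofReal_eq_zero.mpr hb] at h
    exact ENNReal.not_lt_zero h
  have hb''lt : b'' < b := by
    have := (ENNReal.toReal_lt_toReal hcne ENNReal.ofReal_ne_top).mpr hc2
    rwa [ENNReal.toReal_ofReal hbpos.le] at this
  have hcof : c = ENNReal.ofReal b'' := (ENNReal.ofReal_toReal hcne).symm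
  have hev : ∀ᶠ q : ℕ in atTop,
      ENNReal.ofReal (Real.log (distZ ((q : ℝ) * x))⁻¹ / (q : ℝ)) < c :=
    eventually_lt_of_limsup_lt hc1
  have hlow : ∀ᶠ q : ℕ in atTop,
      Real.exp ((b - b'') * q) ≤ Real.exp (b * q) * distZ ((q : ℝ) * x) := by
    filter_upwards [hev, eventually_ge_atTop 1] with q hq h1
    have hqpos : (0 : ℝ) < q := by exact_mod_cast h1
    have hδpos := distZ_pos x hx h1
    rw [hcof, ENNReal.ofReal_lt_ofReal_iff hb''pos] at hq
    have hlog : Real.log (distZ ((q : ℝ) * x))⁻¹ < b'' * q := (div_lt_iff₀ hqpos).mp hq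
    have hinv : (distZ ((q : ℝ) * x))⁻¹ < Real.exp (b'' * q) := by
      have := Real.exp_lt_exp.mpr hlog
      rwa [Real.exp_log (by positivity)] at this
    have hδ : Real.exp (-(b'' * q)) < distZ ((q : ℝ) * x) := by
      rw [Real.exp_neg]
      exact inv_lt_of_inv_lt₀ hδpos hinv
    calc Real.exp ((b - b'') * q) = Real.exp (b * q) * Real.exp (-(b'' * q)) := by
          rw [← Real.exp_add]; ring_nf
      _ ≤ Real.exp (b * q) * distZ ((q : ℝ) * x) :=
          mul_le_mul_of_nonneg_left hδ.le (Real.exp_pos _).le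
  have hexp : Tendsto (fun q : ℕ => Real.exp ((b - b'') * q)) atTop atTop := by
    apply Real.tendsto_exp_atTop.comp
    exact Tendsto.const_mul_atTop (by linarith) tendsto_natCast_atTop_atTop
  exact tendsto_atTop_mono' atTop hlow hexp

/-- For irrational `x`, the exponential type equals the infimum of the set of `B ∈ [0,∞)`
such that `e^{Bq} dist(qx,ℤ) → ∞`, and also the infimum of the set of `B ∈ [0,∞)` such
that `dist(qx,ℤ) ≥ C e^{-Bq}` eventually, for some `C > 0`.  (In `ℝ≥0∞`, `sInf ∅ = ∞`.) -/
theorem stmt6 (x : ℝ) (hx : Irrational x) :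
    Bsup x = sInf {B : ℝ≥0∞ | ∃ b : ℝ, 0 ≤ b ∧ B = ENNReal.ofReal b ∧
        Tendsto (fun q : ℕ => Real.exp (b * q) * distZ ((q : ℝ) * x)) atTop atTop} ∧
    Bsup x = sInf {B : ℝ≥0∞ | ∃ b : ℝ, 0 ≤ b ∧ B = ENNReal.ofReal b ∧
        ∃ C > (0 : ℝ), ∃ Q : ℕ, ∀ q : ℕ, Q ≤ q →
          C * Real.exp (-b * q) ≤ distZ ((q : ℝ) * x)} := by
  set S₁ := {B : ℝ≥0∞ | ∃ b : ℝ, 0 ≤ b ∧ B = ENNReal.ofReal b ∧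
        Tendsto (fun q : ℕ => Real.exp (b * q) * distZ ((q : ℝ) * x)) atTop atTop}
  set S₂ := {B : ℝ≥0∞ | ∃ b : ℝ, 0 ≤ b ∧ B = ENNReal.ofReal b ∧
        ∃ C > (0 : ℝ), ∃ Q : ℕ, ∀ q : ℕ, Q ≤ q →
          C * Real.exp (-b * q) ≤ distZ ((q : ℝ) * x)}
  have hsub : S₁ ⊆ S₂ := by
    rintro B ⟨b, hb, rfl, ht⟩
    obtain ⟨Q, hQ⟩ := eventually_atTop.1 (tendsto_atTop.mp ht 1)
    refine ⟨b, hb, rfl, 1, one_pos, Q, fun q hq => ?_⟩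
    have h' := hQ q hq
    have hmul : Real.exp (-b * q) * (Real.exp (b * q) * distZ ((q : ℝ) * x))
        = distZ ((q : ℝ) * x) := by
      rw [← mul_assoc, ← Real.exp_add]; ring_nf; simp
    calc 1 * Real.exp (-b * q) = Real.exp (-b * q) * 1 := by ring
      _ ≤ Real.exp (-b * q) * (Real.exp (b * q) * distZ ((q : ℝ) * x)) :=
          mul_le_mul_of_nonneg_left h' (Real.exp_pos _).le
      _ = distZ ((q : ℝ) * x) := hmul
  have h1 : Bsup x ≤ sInf S₂ := by
    apply le_sInf
    rintro B ⟨b, hb, rfl, C, hC, Q, h⟩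
    exact Bsup_le x hC Q h
  have h2 : sInf S₂ ≤ sInf S₁ := sInf_le_sInf hsub
  have h3 : sInf S₁ ≤ Bsup x := by
    by_contra hcon
    push_neg at hcon
    obtain ⟨c, hc1, hc2⟩ := exists_between hcon
    have hcne : c ≠ ⊤ := fun h => by rw [h] at hc2; exact (not_top_lt hc2)
    have hmem : c ∈ S₁ := by
      refine ⟨c.toReal, ENNReal.toReal_nonneg, (ENNReal.ofReal_toReal hcne).symm, ?_⟩
      apply tendsto_of_Bsup_lt x hx
      rwa [← ENNReal.ofReal_toReal hcne] at hc1
    exact absurd (sInf_le hmem) (not_le.mpr hc2)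
  exact ⟨le_antisymm (h1.trans h2) h3, le_antisymm h1 (h2.trans h3)⟩
end

section
/- For an irrational real number x and any matrix (a b; c d) in GL(2,ℤ) with cx + d ≠ 0, one has B_sup((ax+b)/(cx+d)) = B_sup(x)/|cx+d|, where B_sup denotes the exponential type (limsup of log(1/dist(qx,ℤ))/q over positive integers q), valued in [0,+∞]. -/
open Filter
open scoped ENNReal

lemma distZ_pos_s9 {z : ℝ} (h : Irrational z) : 0 < distZ z :=
  abs_pos.2 (sub_ne_zero.2 fun h' => (h.ne_int (round z)) h')

lemma distZ_le (z : ℝ) (k : ℤ) : distZ z ≤ |z - k| := round_le z k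

lemma distZ_neg (z : ℝ) : distZ (-z) = distZ z := by
  apply le_antisymm
  · calc distZ (-z) ≤ |(-z) - ((-round z : ℤ) : ℝ)| := distZ_le _ _
      _ = distZ z := by rw [Int.cast_neg]; unfold distZ; rw [← abs_neg]; ring_nf
  · calc distZ z ≤ |z - ((-round (-z) : ℤ) : ℝ)| := distZ_le _ _
      _ = distZ (-z) := by rw [Int.cast_neg]; unfold distZ; rw [← abs_neg]; ring_nf

lemma irr_moebius (x : ℝ) (hx : Irrational x) (a b c d : ℤ)
    (hdet : a * d - b * c = 1 ∨ a * d - b * c = -1)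
    (hcd : (c : ℝ) * x + (d : ℝ) ≠ 0) :
    Irrational (((a : ℝ) * x + (b : ℝ)) / ((c : ℝ) * x + (d : ℝ))) := by
  rintro ⟨t, ht⟩
  have h1 : (t : ℝ) * ((c : ℝ) * x + d) = (a : ℝ) * x + b := by
    rw [ht]; exact div_mul_cancel₀ _ hcd
  have h2 : ((a : ℝ) - (t : ℝ) * c) * x = (t : ℝ) * d - b := by ring_nf; ring_nf at h1; linarith
  by_cases hac : (a : ℝ) - (t : ℝ) * c = 0
  · have hb : (t : ℝ) * d - b = 0 := by rw [hac, zero_mul] at h2; linarith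
    have hdetz : ((a * d - b * c : ℤ) : ℝ) = 0 := by
      push_cast
      have ha' : (a : ℝ) = t * c := by linarith
      have hb' : (b : ℝ) = t * d := by linarith
      rw [ha', hb']; ring
    rcases hdet with h | h <;> rw [h] at hdetz <;> norm_num at hdetz
  · refine hx ⟨(t * d - b) / (t * c - a) * (-1), ?_⟩
    push_cast
    rw [eq_comm, ← h2]
    have hca : (t : ℝ) * c - a ≠ 0 := fun h => hac (by linarith)
    field_simp
    ring

set_option maxHeartbeats 1000000 in
lemma key (x : ℝ) (hx : Irrational x) (a b c d : ℤ)
    (hdet : a * d - b * c = 1 ∨ a * d - b * c = -1)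
    (hcd : (c : ℝ) * x + (d : ℝ) ≠ 0) :
    Bsup x ≤ Bsup (((a : ℝ) * x + (b : ℝ)) / ((c : ℝ) * x + (d : ℝ)))
      * ENNReal.ofReal |(c : ℝ) * x + (d : ℝ)| := by
  set y := ((a : ℝ) * x + (b : ℝ)) / ((c : ℝ) * x + (d : ℝ)) with hy_def
  set r := |(c : ℝ) * x + (d : ℝ)| with hr_def
  have hr : 0 < r := abs_pos.2 hcd
  have hy : Irrational y := irr_moebius x hx a b c d hdet hcd
  have hdetabs : |((a * d - b * c : ℤ) : ℝ)| = 1 := by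
    rcases hdet with h | h <;> rw [h] <;> norm_num
  refine ENNReal.le_of_forall_nnreal_lt fun s hs => ?_
  have hfreq : ∃ᶠ q : ℕ in atTop,
      (s : ℝ≥0∞) < ENNReal.ofReal (Real.log (distZ ((q : ℝ) * x))⁻¹ / (q : ℝ)) :=
    frequently_lt_of_lt_limsup (by isBoundedDefault) hs
  -- sequence of new denominators
  set m : ℕ → ℤ := fun q => c * round ((q : ℝ) * x) + d * q with hm_def
  set Q : ℕ → ℕ := fun q => (m q).natAbs with hQ_def
  have hQcast : ∀ q : ℕ, ((Q q : ℝ)) = |((m q : ℤ) : ℝ)| := by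
    intro q; rw [hQ_def]; push_cast [Nat.cast_natAbs, Int.cast_abs]; rfl
  have habs : ∀ q : ℕ, |((m q : ℤ) : ℝ) - (q : ℝ) * ((c : ℝ) * x + d)| ≤ |(c : ℝ)| / 2 := by
    intro q
    have h1 : ((m q : ℤ) : ℝ) - (q : ℝ) * ((c : ℝ) * x + d)
        = (c : ℝ) * (((round ((q : ℝ) * x) : ℤ) : ℝ) - (q : ℝ) * x) := by
      rw [hm_def]; push_cast; ring
    rw [h1, abs_mul]
    calc |(c : ℝ)| * |((round ((q : ℝ) * x) : ℤ) : ℝ) - (q : ℝ) * x|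
        ≤ |(c : ℝ)| * (1 / 2) := by
          gcongr
          rw [abs_sub_comm]
          exact abs_sub_round ((q : ℝ) * x)
      _ = |(c : ℝ)| / 2 := by ring
  have hQub : ∀ q : ℕ, (Q q : ℝ) ≤ (q : ℝ) * r + |(c : ℝ)| / 2 := by
    intro q
    rw [hQcast]
    calc |((m q : ℤ) : ℝ)|
        = |(q : ℝ) * ((c : ℝ) * x + d) + (((m q : ℤ) : ℝ) - (q : ℝ) * ((c : ℝ) * x + d))| := by
            ring_nf
      _ ≤ |(q : ℝ) * ((c : ℝ) * x + d)|
          + |((m q : ℤ) : ℝ) - (q : ℝ) * ((c : ℝ) * x + d)| := abs_add_le _ _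
      _ ≤ (q : ℝ) * r + |(c : ℝ)| / 2 := by
          rw [abs_mul, abs_of_nonneg (Nat.cast_nonneg q), ← hr_def]
          gcongr
          exact habs q
  have hQlb : ∀ q : ℕ, (q : ℝ) * r - |(c : ℝ)| / 2 ≤ (Q q : ℝ) := by
    intro q
    rw [hQcast]
    have := habs q
    have h2 : |(q : ℝ) * ((c : ℝ) * x + d)| - |((m q : ℤ) : ℝ)|
        ≤ |(c : ℝ)| / 2 := le_trans (by rw [abs_sub_comm] at this ⊢; exact abs_sub_abs_le_abs_sub _ _) this
    rw [abs_mul, abs_of_nonneg (Nat.cast_nonneg q), ← hr_def] at h2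
    linarith
  have hQtop : Tendsto Q atTop atTop := by
    rw [tendsto_atTop]
    intro b
    have h1 : Tendsto (fun q : ℕ => (q : ℝ) * r) atTop atTop :=
      (tendsto_natCast_atTop_atTop (R := ℝ)).atTop_mul_const hr
    filter_upwards [h1.eventually_ge_atTop ((b : ℝ) + |(c : ℝ)| / 2)] with q hq
    have := hQlb q
    have : (b : ℝ) ≤ (Q q : ℝ) := by linarith
    exact_mod_cast this
  suffices h : ENNReal.ofReal ((s : ℝ) / r) ≤ Bsup y by
    calc (s : ℝ≥0∞) = ENNReal.ofReal ((s : ℝ) / r * r) := by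
          rw [div_mul_cancel₀ _ hr.ne', ENNReal.ofReal_coe_nnreal]
      _ = ENNReal.ofReal ((s : ℝ) / r) * ENNReal.ofReal r :=
          ENNReal.ofReal_mul (by positivity)
      _ ≤ Bsup y * ENNReal.ofReal r := mul_le_mul_left h _
  have hεbound : ∀ ε : ℝ, 0 < ε →
      ENNReal.ofReal (((s : ℝ) - ε) / (r + ε)) ≤ Bsup y := by
    intro ε hε
    rcases le_or_gt ((s : ℝ) - ε) 0 with hsε | hsε
    · rw [ENNReal.ofReal_eq_zero.2 (div_nonpos_of_nonpos_of_nonneg hsε (by linarith))]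
      exact bot_le
    -- eventual side conditions
    have hE2 : ∀ᶠ q : ℕ in atTop, |(c : ℝ)| / 2 ≤ (q : ℝ) * ε :=
      ((tendsto_natCast_atTop_atTop (R := ℝ)).atTop_mul_const hε).eventually_ge_atTop _
    have hE3 : ∀ᶠ q : ℕ in atTop, 1 + |(c : ℝ)| / 2 ≤ (q : ℝ) * r :=
      ((tendsto_natCast_atTop_atTop (R := ℝ)).atTop_mul_const hr).eventually_ge_atTop _
    have hE4 : ∀ᶠ q : ℕ in atTop, -Real.log r ≤ (q : ℝ) * ε :=
      ((tendsto_natCast_atTop_atTop (R := ℝ)).atTop_mul_const hε).eventually_ge_atTop _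
    have hE1 : ∀ᶠ q : ℕ in atTop, 1 ≤ q := eventually_ge_atTop 1
    have hfreq2 : ∃ᶠ q : ℕ in atTop,
        ENNReal.ofReal (((s : ℝ) - ε) / (r + ε)) ≤
          ENNReal.ofReal (Real.log (distZ ((Q q : ℝ) * y))⁻¹ / (Q q : ℝ)) := by
      refine (hfreq.and_eventually ((hE1.and hE2).and (hE3.and hE4))).mono ?_
      rintro q ⟨hsq, ⟨hq1, hq2⟩, hq3, hq4⟩
      have hq0 : (0 : ℝ) < q := by exact_mod_cast hq1
      -- Q q ≥ 1 and bounds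
      have hQ1 : (1 : ℝ) ≤ (Q q : ℝ) := by have := hQlb q; linarith
      have hQpos : (0 : ℝ) < (Q q : ℝ) := by linarith
      have hQle : (Q q : ℝ) ≤ (q : ℝ) * (r + ε) := by
        have := hQub q; nlinarith
      -- the real inequality from the frequently hypothesis
      have hL : (s : ℝ) < Real.log (distZ ((q : ℝ) * x))⁻¹ / (q : ℝ) := by
        have := (ENNReal.lt_ofReal_iff_toReal_lt ENNReal.coe_ne_top).1 hsq
        simpa using this
      have hLq : (s : ℝ) * q < Real.log (distZ ((q : ℝ) * x))⁻¹ :=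
        (lt_div_iff₀ hq0).1 hL
      -- distances
      have hdq : 0 < distZ ((q : ℝ) * x) :=
        distZ_pos_s9 ((irrational_natCast_mul_iff.2 ⟨by omega, hx⟩))
      have hQne : Q q ≠ 0 := by exact_mod_cast hQpos.ne' 
      have hd' : 0 < distZ ((Q q : ℝ) * y) :=
        distZ_pos_s9 ((irrational_natCast_mul_iff.2 ⟨hQne, hy⟩))
      -- key identity
      set p : ℤ := round ((q : ℝ) * x) with hp_def
      have hid : ((m q : ℤ) : ℝ) * y - ((a * p + b * q : ℤ) : ℝ)
          = ((a * d - b * c : ℤ) : ℝ) * ((q : ℝ) * x - (p : ℝ)) / ((c : ℝ) * x + d) := by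
        rw [hy_def, hm_def]
        push_cast
        field_simp
        ring
      have habs_id : |((m q : ℤ) : ℝ) * y - ((a * p + b * q : ℤ) : ℝ)|
          = distZ ((q : ℝ) * x) / r := by
        rw [hid, abs_div, abs_mul, hdetabs, one_mul, ← hr_def]
        rfl
      have hdist' : distZ ((Q q : ℝ) * y) ≤ distZ ((q : ℝ) * x) / r := by
        rcases abs_choice ((m q : ℤ) : ℝ) with hch | hch
        · have : (Q q : ℝ) * y = ((m q : ℤ) : ℝ) * y := by rw [hQcast q, hch]
          rw [this, ← habs_id]
          exact distZ_le _ _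
        · have h1 : (Q q : ℝ) * y = -(((m q : ℤ) : ℝ) * y) := by
            rw [hQcast q, hch]; ring
          rw [h1, distZ_neg, ← habs_id]
          exact distZ_le _ _
      -- log comparison
      have hlog : Real.log r + Real.log (distZ ((q : ℝ) * x))⁻¹
          ≤ Real.log (distZ ((Q q : ℝ) * y))⁻¹ := by
        have h1 : r / distZ ((q : ℝ) * x) ≤ (distZ ((Q q : ℝ) * y))⁻¹ := by
          rw [inv_eq_one_div, div_le_div_iff₀ hdq hd']
          have h2 : distZ ((Q q : ℝ) * y) * r ≤ distZ ((q : ℝ) * x) :=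
            (le_div_iff₀ hr).1 hdist'
          nlinarith
        have h2 : 0 < r / distZ ((q : ℝ) * x) := by positivity
        calc Real.log r + Real.log (distZ ((q : ℝ) * x))⁻¹
            = Real.log (r / distZ ((q : ℝ) * x)) := by
              rw [Real.log_div hr.ne' hdq.ne', Real.log_inv]; ring
          _ ≤ Real.log (distZ ((Q q : ℝ) * y))⁻¹ := Real.log_le_log h2 h1
      -- numeric chain
      have hnum : ((s : ℝ) - ε) * q ≤ Real.log (distZ ((Q q : ℝ) * y))⁻¹ := by
        nlinarith
      have hfinal : ((s : ℝ) - ε) / (r + ε)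
          ≤ Real.log (distZ ((Q q : ℝ) * y))⁻¹ / (Q q : ℝ) := by
        have h0 : ((s : ℝ) - ε) / (r + ε) = ((s : ℝ) - ε) * q / ((r + ε) * q) := by
          rw [mul_div_mul_right _ _ hq0.ne']
        rw [h0]
        apply div_le_div₀ (by nlinarith) hnum hQpos (by linarith)
      exact ENNReal.ofReal_le_ofReal hfinal
    exact le_limsup_of_frequently_le (hQtop.frequently hfreq2) (by isBoundedDefault)
  have htend : Tendsto (fun ε : ℝ => ENNReal.ofReal (((s : ℝ) - ε) / (r + ε)))
      (nhdsWithin 0 (Set.Ioi 0)) (nhds (ENNReal.ofReal ((s : ℝ) / r))) := by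
    apply Tendsto.comp (ENNReal.continuous_ofReal.tendsto _)
    apply Tendsto.mono_left _ nhdsWithin_le_nhds
    have hcont : ContinuousAt (fun ε : ℝ => ((s : ℝ) - ε) / (r + ε)) 0 :=
      ContinuousAt.div (by fun_prop) (by fun_prop) (by simpa using hr.ne')
    simpa using hcont.tendsto
  exact le_of_tendsto htend (eventually_nhdsWithin_of_forall fun ε hε => hεbound ε hε)

/-- For irrational `x` and a matrix `(a b; c d) ∈ GL(2,ℤ)` (integer entries, determinant
`±1`) with `cx + d ≠ 0`, one has `B_sup((ax+b)/(cx+d)) = B_sup(x)/|cx+d|`. -/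
theorem stmt9 (x : ℝ) (hx : Irrational x) (a b c d : ℤ)
    (hdet : a * d - b * c = 1 ∨ a * d - b * c = -1)
    (hcd : (c : ℝ) * x + (d : ℝ) ≠ 0) :
    Bsup (((a : ℝ) * x + (b : ℝ)) / ((c : ℝ) * x + (d : ℝ)))
      = Bsup x / ENNReal.ofReal |(c : ℝ) * x + (d : ℝ)| := by
  set y := ((a : ℝ) * x + (b : ℝ)) / ((c : ℝ) * x + (d : ℝ)) with hy_def
  set r := |(c : ℝ) * x + (d : ℝ)| with hr_def
  have hr : 0 < r := abs_pos.2 hcd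
  have hy : Irrational y := irr_moebius x hx a b c d hdet hcd
  have hdetR : ((a * d - b * c : ℤ) : ℝ) ≠ 0 := by
    rcases hdet with h | h <;> rw [h] <;> norm_num
  have hdetabs : |((a * d - b * c : ℤ) : ℝ)| = 1 := by
    rcases hdet with h | h <;> rw [h] <;> norm_num
  have h1 : Bsup x ≤ Bsup y * ENNReal.ofReal r := key x hx a b c d hdet hcd
  -- inverse matrix data
  have hdet2 : d * a - (-b) * (-c) = 1 ∨ d * a - (-b) * (-c) = -1 := by
    rcases hdet with h | h
    · left; linarith
    · right; linarith
  have hval : ((-c : ℤ) : ℝ) * y + ((a : ℤ) : ℝ)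
      = ((a * d - b * c : ℤ) : ℝ) / ((c : ℝ) * x + (d : ℝ)) := by
    rw [hy_def]
    push_cast
    field_simp
    ring
  have hcd2 : ((-c : ℤ) : ℝ) * y + ((a : ℤ) : ℝ) ≠ 0 := by
    rw [hval]
    exact div_ne_zero hdetR hcd
  have hnum : ((d : ℤ) : ℝ) * y + ((-b : ℤ) : ℝ)
      = ((a * d - b * c : ℤ) : ℝ) * x / ((c : ℝ) * x + (d : ℝ)) := by
    rw [hy_def]
    push_cast
    rw [eq_div_iff hcd]
    have hk : ((a : ℝ) * x + b) / ((c : ℝ) * x + d) * ((c : ℝ) * x + d) = (a : ℝ) * x + b :=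
      div_mul_cancel₀ _ hcd
    linear_combination (d : ℝ) * hk
  have hback : (((d : ℤ) : ℝ) * y + ((-b : ℤ) : ℝ)) / (((-c : ℤ) : ℝ) * y + ((a : ℤ) : ℝ))
      = x := by
    rw [hnum, hval]
    field_simp
    have h5 : (a : ℝ) * d - b * c ≠ 0 := by push_cast at hdetR; exact hdetR
    rw [mul_comm]; exact mul_div_cancel_left₀ x (show x * (c : ℝ) + d ≠ 0 by rw [mul_comm]; exact hcd)
  have habs2 : |((-c : ℤ) : ℝ) * y + ((a : ℤ) : ℝ)| = r⁻¹ := by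
    rw [hval, abs_div, hdetabs, ← hr_def, one_div]
  have h2 : Bsup y ≤ Bsup x * ENNReal.ofReal r⁻¹ := by
    have := key y hy d (-b) (-c) a hdet2 hcd2
    rwa [hback, habs2] at this
  apply le_antisymm
  · calc Bsup y ≤ Bsup x * ENNReal.ofReal r⁻¹ := h2
      _ = Bsup x / ENNReal.ofReal r := by
          rw [ENNReal.ofReal_inv_of_pos hr, div_eq_mul_inv]
  · rw [ENNReal.div_le_iff_le_mul (Or.inl (ENNReal.ofReal_pos.2 hr).ne')
      (Or.inl ENNReal.ofReal_ne_top)]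
    exact h1
end
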